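/- Let E be a real vector space with a continuous inner product ⟨·,·⟩, G a group acting on E by linear maps preserving ⟨·,·⟩, u ∈ E, and O = {Φ_g(u) : g ∈ G} its orbit. Suppose for each g the action is differentiable in the group direction through C¹-curves, so tangent spaces T_w O are defined. Let V be a compact symmetric set of group elements with conjugation-invariance gVg⁻¹ = V, and suppose R_V(u) := min{d_s(Φ_g(u), u) : g ∈ ∂V} > 0, where d_s is the distance induced by the inner product. Then for any v ∈ E with d(v, O) < R_V(u)/3, there exists w ∈ O such that ⟨w - v, y⟩ = 0 for all y ∈ T_w O. -/

import Mathlib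

set_option maxHeartbeats 1000000 in
/-- Let `G` act on `E` by linear maps preserving a continuous scalar product `B` and the
norm, and let `V` be a bounded open conjugation-invariant neighbourhood of the identity
with compact closure such that `R_V(u) ≥ R > 0` on the boundary of `V`.  Then any `v`
with `d(v, O_u) < R/3` admits a point `w` on the orbit `O_u` such that `w - v` is
`B`-orthogonal to the tangent space `T_w O_u` (spanned by the generators of the
one-parameter subgroups). -/
theorem stmt11 {G : Type*} [Group G] [TopologicalSpace G] [IsTopologicalGroup G]
    {E : Type*} [NormedAddCommGroup E] [NormedSpace ℝ E] [MulAction G E]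
    (B : E → E → ℝ)
    (hBadd : ∀ u v w : E, B (u + v) w = B u w + B v w)
    (hBsmul : ∀ (a : ℝ) (u w : E), B (a • u) w = a * B u w)
    (hBsymm : ∀ u v : E, B u v = B v u)
    (hBpos : ∀ u : E, u ≠ 0 → 0 < B u u)
    (hBcont : ∀ u v : E, |B u v| ≤ ‖u‖ * ‖v‖)
    (hlin : ∀ g : G, IsLinearMap ℝ (fun x : E => g • x))
    (hBinv : ∀ (g : G) (u v : E), B (g • u) (g • v) = B u v)
    (hnorm : ∀ (g : G) (u : E), ‖g • u‖ = ‖u‖)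
    (hact_cont : ∀ x : E, Continuous fun g : G => g • x)
    {Ξ : Type*} (oneParam : Ξ → ℝ → G)
    (hone_cont : ∀ ξ : Ξ, Continuous (oneParam ξ))
    (hone_hom : ∀ (ξ : Ξ) (s t : ℝ), oneParam ξ (s + t) = oneParam ξ s * oneParam ξ t)
    (hone_zero : ∀ ξ : Ξ, oneParam ξ 0 = 1)
    (u : E)
    (V : Set G) (hVopen : IsOpen V) (h1V : (1 : G) ∈ V)
    (hVcpt : IsCompact (closure V))
    (hVconj : ∀ g : G, (fun h => g * h * g⁻¹) '' V = V)
    (R : ℝ) (hR : 0 < R)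
    (hRbd : ∀ g ∈ frontier V, R ≤ Real.sqrt (B (g • u - u) (g • u - u)))
    (v : E) (hv : Metric.infDist v (MulAction.orbit G u) < R / 3) :
    ∃ w ∈ MulAction.orbit G u,
      ∀ y : E, (∃ ξ : Ξ, HasDerivAt (fun t : ℝ => oneParam ξ t • w) y 0) →
        B (w - v) y = 0 := by

  classical
  -- turn B into a continuous bilinear map
  have hBadd' : ∀ u v w : E, B u (v + w) = B u v + B u w := fun a c d => by
    rw [hBsymm, hBadd, hBsymm c a, hBsymm d a]
  have hBsmul' : ∀ (a : ℝ) (u w : E), B u (a • w) = a * B u w := fun a c d => by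
    rw [hBsymm, hBsmul, hBsymm d c]
  set bL : E →ₗ[ℝ] E →ₗ[ℝ] ℝ := LinearMap.mk₂ ℝ B hBadd hBsmul hBadd' hBsmul' with hbL
  set b : E →L[ℝ] E →L[ℝ] ℝ :=
    LinearMap.mkContinuous₂ bL 1 (fun x y => by simpa [hbL] using hBcont x y) with hb
  have hbapp : ∀ x y, b x y = B x y := fun x y => by
    rw [hb, LinearMap.mkContinuous₂_apply, hbL, LinearMap.mk₂_apply]
  have hBsub : ∀ a c d : E, B (a - c) d = B a d - B c d := by
    intro a c d
    rw [sub_eq_add_neg, hBadd, ← neg_one_smul ℝ c, hBsmul]; ring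
  have hBsub' : ∀ a c d : E, B a (c - d) = B a c - B a d := by
    intro a c d
    rw [hBsymm, hBsub, hBsymm c a, hBsymm d a]
  have hb0 : ∀ x : E, 0 ≤ B x x := by
    intro x
    by_cases hx : x = 0
    · subst hx
      have h00 : B (0:E) 0 = 0 := by
        have : B ((0:ℝ) • (0:E)) 0 = 0 * B 0 0 := hBsmul 0 0 0
        simpa using this
      exact le_of_eq h00.symm
    · exact le_of_lt (hBpos x hx)
  -- Cauchy-Schwarz
  have hCS : ∀ x y : E, B x y ≤ Real.sqrt (B x x) * Real.sqrt (B y y) := by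
    intro x y
    by_cases hy : y = 0
    · subst hy
      have h0 : B x ((0:ℝ) • (0:E)) = 0 * B x 0 := hBsmul' 0 x 0
      simp only [zero_smul, zero_mul] at h0
      rw [h0]
      positivity
    · have hyy : 0 < B y y := hBpos y hy
      set t : ℝ := B x y / B y y with ht
      have hexp : 0 ≤ B x x - (B x y) ^ 2 / B y y := by
        have h0 := hb0 (x - t • y)
        have : B (x - t • y) (x - t • y)
            = B x x - 2 * t * B x y + t ^ 2 * B y y := by
          simp only [hBsub, hBsub', hBsmul, hBsmul', hBsymm y x]
          ring
        rw [this, ht] at h0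
        have : B x x - 2 * (B x y / B y y) * B x y + (B x y / B y y) ^ 2 * B y y
            = B x x - (B x y) ^ 2 / B y y := by
          field_simp
          ring
        linarith [h0, this]
      have hsq : (B x y) ^ 2 ≤ B x x * B y y := by
        have h3 : 0 ≤ (B x x - (B x y) ^ 2 / B y y) * B y y := by
          simpa using mul_le_mul_of_nonneg_right hexp (le_of_lt hyy)
        have h2 : (B x x - (B x y) ^ 2 / B y y) * B y y
            = B x x * B y y - (B x y) ^ 2 := by field_simp
        linarith [h2, h3]
      calc B x y ≤ |B x y| := le_abs_self _
        _ = Real.sqrt ((B x y) ^ 2) := (Real.sqrt_sq_eq_abs _).symm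
        _ ≤ Real.sqrt (B x x * B y y) := Real.sqrt_le_sqrt hsq
        _ = Real.sqrt (B x x) * Real.sqrt (B y y) := Real.sqrt_mul (hb0 x) _
  set s : E → ℝ := fun x => Real.sqrt (B x x) with hs
  have hs_tri : ∀ x y : E, s (x + y) ≤ s x + s y := by
    intro x y
    have hexp : B (x + y) (x + y) = B x x + 2 * B x y + B y y := by
      rw [hBadd, hBadd' x x y, hBadd' y x y, hBsymm y x]; ring
    have hle : B (x + y) (x + y) ≤ (s x + s y) ^ 2 := by
      have h1 := hCS x y
      have h2 : s x ^ 2 = B x x := Real.sq_sqrt (hb0 x)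
      have h3 : s y ^ 2 = B y y := Real.sq_sqrt (hb0 y)
      nlinarith [hexp]
    calc s (x + y) ≤ Real.sqrt ((s x + s y) ^ 2) := Real.sqrt_le_sqrt hle
      _ = |s x + s y| := Real.sqrt_sq_eq_abs _
      _ = s x + s y := abs_of_nonneg (by positivity)
  have hs_norm : ∀ x : E, s x ≤ ‖x‖ := by
    intro x
    have : B x x ≤ ‖x‖ * ‖x‖ := (le_abs_self _).trans (hBcont x x)
    calc s x ≤ Real.sqrt (‖x‖ * ‖x‖) := Real.sqrt_le_sqrt this
      _ = ‖x‖ := Real.sqrt_mul_self (norm_nonneg x)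
  have hs_neg : ∀ x : E, s (-x) = s x := by
    intro x
    have : B (-x) (-x) = B x x := by
      rw [← neg_one_smul ℝ x, hBsmul, hBsmul']; ring
    simp [hs, this]
  -- find a nearby orbit point
  obtain ⟨p, hpO, hpd⟩ :=
    (Metric.infDist_lt_iff ⟨u, MulAction.mem_orbit_self u⟩).1 hv
  obtain ⟨g₁, rfl⟩ := hpO
  set u' : E := g₁ • u with hu'
  -- frontier bound transferred to u'
  have hfrontier : ∀ g ∈ frontier V, R ≤ s (g • u' - u') := by
    intro g hg
    have hconjhomeo : ∀ a : G,
        (fun h => a * h * a⁻¹) '' frontier V = frontier V := by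
      intro a
      have : (fun h => a * h * a⁻¹) =
          ((Homeomorph.mulLeft a).trans (Homeomorph.mulRight a⁻¹) : G → G) := rfl
      rw [this, Homeomorph.image_frontier, ← this, hVconj a]
    have hg' : g₁⁻¹ * g * g₁ ∈ frontier V := by
      have := hconjhomeo g₁⁻¹
      rw [← this]
      exact ⟨g, hg, by group⟩
    have hkey : g • u' - u' = g₁ • ((g₁⁻¹ * g * g₁) • u - u) := by
      have hl := (IsLinearMap.mk' _ (hlin g₁)).map_sub ((g₁⁻¹ * g * g₁) • u) u
      simp only [IsLinearMap.mk'_apply] at hl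
      rw [hu', hl, ← mul_smul, ← mul_smul]
      congr 2
      group
    have : s (g • u' - u') = s ((g₁⁻¹ * g * g₁) • u - u) := by
      rw [hkey]; simp only [hs, hBinv]
    rw [this]
    exact hRbd _ hg'
  -- minimize over the compact closure of V
  set f : G → ℝ := fun g => B (g • u' - v) (g • u' - v) with hf
  have hfc : Continuous f := by
    have h1 : Continuous fun g : G => g • u' - v :=
      (hact_cont u').sub continuous_const
    have h2 : Continuous fun x : E => B x x := by
      have hc2 : Continuous fun p : E × E => b p.1 p.2 :=
        b.isBoundedBilinearMap.continuous
      have hc3 := hc2.comp (continuous_id.prodMk continuous_id :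
        Continuous fun x : E => (x, x))
      simpa only [Function.comp_def, hbapp, id_eq] using hc3
    exact h2.comp h1
  obtain ⟨g₀, hg₀mem, hg₀min⟩ :=
    hVcpt.exists_isMinOn ⟨1, subset_closure h1V⟩ hfc.continuousOn
  -- the minimizer is in the open set V
  have hdv : s (u' - v) < R / 3 := by
    have : ‖u' - v‖ < R / 3 := by
      rw [norm_sub_rev]; simpa [dist_eq_norm, hu'] using hpd
    exact lt_of_le_of_lt (hs_norm _) this
  have hg₀V : g₀ ∈ V := by
    by_contra hgV
    have hgfr : g₀ ∈ frontier V := by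
      rw [frontier, hVopen.interior_eq]
      exact ⟨hg₀mem, hgV⟩
    have h1 : f g₀ ≤ f 1 := hg₀min (subset_closure h1V)
    have hf1 : f 1 = B (u' - v) (u' - v) := by simp [hf]
    have hsg₀ : s (g₀ • u' - v) < R / 3 := by
      have : s (g₀ • u' - v) ≤ s (u' - v) := by
        apply Real.sqrt_le_sqrt
        rw [← hf1]; exact h1
      exact lt_of_le_of_lt this hdv
    have htri : s (g₀ • u' - u') ≤ s (g₀ • u' - v) + s (u' - v) := by
      have : g₀ • u' - u' = (g₀ • u' - v) + (v - u') := by abel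
      rw [this]
      calc s ((g₀ • u' - v) + (v - u')) ≤ s (g₀ • u' - v) + s (v - u') :=
            hs_tri _ _
        _ = s (g₀ • u' - v) + s (u' - v) := by rw [← hs_neg (u' - v), neg_sub]
    have := hfrontier g₀ hgfr
    linarith
  -- the orthogonal point
  refine ⟨g₀ • u', ⟨g₀ * g₁, mul_smul g₀ g₁ u⟩, ?_⟩
  rintro y ⟨ξ, hy⟩
  set w : E := g₀ • u' with hw
  -- h t = f (oneParam ξ t * g₀) has a local minimum at 0
  set h : ℝ → ℝ := fun t => B (oneParam ξ t • w - v) (oneParam ξ t • w - v) with hh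
  have hlocmin : IsLocalMin h 0 := by
    have hcont : Continuous fun t : ℝ => oneParam ξ t * g₀ :=
      (hone_cont ξ).mul continuous_const
    have hmem : ∀ᶠ t in nhds (0:ℝ), oneParam ξ t * g₀ ∈ V := by
      have h0 : (fun t : ℝ => oneParam ξ t * g₀) 0 = g₀ := by
        simp [hone_zero ξ]
      have := hcont.continuousAt (x := (0:ℝ))
      have hnhds : V ∈ nhds g₀ := hVopen.mem_nhds hg₀V
      have := this.preimage_mem_nhds (h0 ▸ hnhds)
      exact this
    filter_upwards [hmem] with t ht
    have hht : h t = f (oneParam ξ t * g₀) := by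
      simp only [hh, hf, hw, mul_smul]
    have hh0 : h 0 = f g₀ := by
      simp only [hh, hf, hw, hone_zero ξ, one_smul]
    rw [hht, hh0]
    exact hg₀min (subset_closure ht)
  -- h is differentiable at 0 with derivative 2 * B (w - v) y
  set c : ℝ → E := fun t : ℝ => oneParam ξ t • w - v with hcdef
  have hc : HasDerivAt c y 0 := hy.sub_const v
  have hc0 : c 0 = w - v := by simp [hcdef, hone_zero ξ]
  have hderiv : HasDerivAt h (2 * B (w - v) y) 0 := by
    have hpair : HasDerivAt (fun t : ℝ => (c t, c t)) (y, y) 0 := hc.prodMk hc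
    have hbil := b.isBoundedBilinearMap.hasFDerivAt (c 0, c 0)
    have hcomp := hbil.comp_hasDerivAt 0 hpair
    have hval : b.isBoundedBilinearMap.deriv (c 0, c 0) (y, y)
        = 2 * B (w - v) y := by
      rw [b.isBoundedBilinearMap.deriv_apply]
      simp only [hc0, hbapp]
      rw [hBsymm y (w - v)]
      ring
    rw [hval] at hcomp
    have hfun : (fun t : ℝ => b ((fun t : ℝ => (c t, c t)) t).1
        ((fun t : ℝ => (c t, c t)) t).2) = h := by
      funext t
      simp only [hbapp, hh, hcdef]
    simpa only [Function.comp_def, hbapp] using hcomp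
  have := hlocmin.hasDerivAt_eq_zero hderiv
  linarith
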